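/- Let N ≥ 2, λ > 0 a real number, b ∈ ℂ, a, c ∈ ℂ^{N−1}, and M ∈ ℂ^{(N−1)×(N−1)}. Define φ(z, w) = (λ z + 2i⟨w, a⟩ + b, M w + c) for (z, w) ∈ ℂ × ℂ^{N−1}, and set Q = λI − Mᴴ M. Then φ maps the Siegel half-plane ℍ^N into itself if and only if: (P1) Q is a Hermitian positive semi-definite matrix; (P3) there exists x ∈ ℂ^{N−1} with Q x = Mᴴ c − a; and (P2) Im(b) − |c|² ≥ xᴴ(Mᴴ c − a) for such an x (note that for x with Qx = Mᴴc − a the number xᴴ(Mᴴ c − a) = xᴴ Q x is a nonnegative real independent of the choice of x). -/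

import Mathlib

open Matrix Set Complex
open scoped ComplexOrder

noncomputable section

def herm {n : Type*} [Fintype n] (x y : n → ℂ) : ℂ :=
  ∑ j, x j * (starRingEnd ℂ) (y j)

def enormSq {n : Type*} [Fintype n] (x : n → ℂ) : ℝ :=
  ∑ j, ‖x j‖ ^ 2

set_option linter.unusedSectionVars false
set_option maxHeartbeats 1000000

section Aux

variable {n : Type*} [Fintype n] [DecidableEq n]

lemma herm_eq (x y : n → ℂ) : herm x y = star y ⬝ᵥ x := by
  simp [herm, dotProduct, mul_comm]

lemma herm_self (x : n → ℂ) : herm x x = (enormSq x : ℂ) := by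
  simp only [herm, enormSq, Complex.mul_conj]
  push_cast
  refine Finset.sum_congr rfl fun j _ => ?_
  rw [Complex.normSq_eq_norm_sq]
  norm_num

lemma herm_conj (x y : n → ℂ) : herm y x = (starRingEnd ℂ) (herm x y) := by
  simp [herm, mul_comm]

lemma re_herm_comm (x y : n → ℂ) : (herm y x).re = (herm x y).re := by
  rw [herm_conj]; simp

lemma herm_mulVec_left (A : Matrix n n ℂ) (x y : n → ℂ) :
    herm (A *ᵥ x) y = herm x (Aᴴ *ᵥ y) := by
  rw [herm_eq, herm_eq, star_mulVec, conjTranspose_conjTranspose,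
    ← dotProduct_mulVec]

lemma herm_add_left (x y z : n → ℂ) : herm (x + y) z = herm x z + herm y z := by
  simp [herm, add_mul, Finset.sum_add_distrib]

lemma herm_sub_left (x y z : n → ℂ) : herm (x - y) z = herm x z - herm y z := by
  simp [herm, sub_mul, Finset.sum_sub_distrib]

lemma herm_add_right (x y z : n → ℂ) : herm x (y + z) = herm x y + herm x z := by
  simp [herm, mul_add, Finset.sum_add_distrib]

lemma herm_sub_right (x y z : n → ℂ) : herm x (y - z) = herm x y - herm x z := by
  simp [herm, mul_sub, Finset.sum_sub_distrib]

lemma herm_smul_left (t : ℂ) (x y : n → ℂ) : herm (t • x) y = t * herm x y := by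
  simp [herm, Finset.mul_sum, mul_assoc]

lemma herm_smul_right (t : ℂ) (x y : n → ℂ) :
    herm x (t • y) = (starRingEnd ℂ) t * herm x y := by
  simp [herm, Finset.mul_sum]; ring_nf
  exact Finset.sum_congr rfl fun j _ => by ring

lemma herm_zero_left (y : n → ℂ) : herm 0 y = 0 := by simp [herm]

lemma exists_solution {Q : Matrix n n ℂ} (hQ : Q.IsHermitian) {d : n → ℂ}
    (hd : ∀ v, Q *ᵥ v = 0 → star v ⬝ᵥ d = 0) : ∃ x, Q *ᵥ x = d := by
  classical
  have hUU : star (hQ.eigenvectorUnitary : Matrix n n ℂ) * (hQ.eigenvectorUnitary : Matrix n n ℂ)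
      = 1 := mem_unitaryGroup_iff'.mp hQ.eigenvectorUnitary.2
  have hUU' : (hQ.eigenvectorUnitary : Matrix n n ℂ) * star (hQ.eigenvectorUnitary : Matrix n n ℂ)
      = 1 := mem_unitaryGroup_iff.mp hQ.eigenvectorUnitary.2
  have he0 : ∀ i, hQ.eigenvalues i = 0 →
      (star (hQ.eigenvectorUnitary : Matrix n n ℂ) *ᵥ d) i = 0 := by
    intro i hi
    have hv : Q *ᵥ ⇑(hQ.eigenvectorBasis i) = 0 := by
      rw [hQ.mulVec_eigenvectorBasis]
      rw [show hQ.eigenvalues i = 0 from hi]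
      simp
    have := hd _ hv
    simpa [mulVec, dotProduct, Matrix.star_apply] using this
  set y : n → ℂ := fun i => if hQ.eigenvalues i = 0 then 0
    else ((hQ.eigenvalues i : ℂ))⁻¹ * ((star (hQ.eigenvectorUnitary : Matrix n n ℂ) *ᵥ d) i)
    with hy
  have hdiag : diagonal (RCLike.ofReal ∘ hQ.eigenvalues) *ᵥ y
      = star (hQ.eigenvectorUnitary : Matrix n n ℂ) *ᵥ d := by
    funext i
    by_cases hi : hQ.eigenvalues i = 0
    · simp [mulVec_diagonal, hy, hi, he0 i hi]
    · have hne : ((hQ.eigenvalues i : ℝ) : ℂ) ≠ 0 := by exact_mod_cast hi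
      simp only [mulVec_diagonal, hy, hi, if_false, Function.comp_apply]
      rw [RCLike.ofReal_alg]
      field_simp
      rw [RCLike.real_smul_eq_coe_mul, mul_one]; rfl
  refine ⟨(hQ.eigenvectorUnitary : Matrix n n ℂ) *ᵥ y, ?_⟩
  have hQU : Q * (hQ.eigenvectorUnitary : Matrix n n ℂ)
      = (hQ.eigenvectorUnitary : Matrix n n ℂ) * Matrix.diagonal (RCLike.ofReal ∘ hQ.eigenvalues) := by
    rw [← hQ.conjStarAlgAut_star_eigenvectorUnitary, Unitary.conjStarAlgAut_apply,
      Unitary.coe_star, star_star, ← mul_assoc, ← mul_assoc, hUU', one_mul]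
  rw [mulVec_mulVec, hQU, ← mulVec_mulVec, hdiag, mulVec_mulVec, hUU', one_mulVec]

end Aux

/-- The map `φ(z, w) = (λ z + 2i⟨w, a⟩ + b, M w + c)` is a self-map of the Siegel
half-plane `ℍ^N = {(z, w) : Im z > |w|²}` if and only if `Q = λI - Mᴴ M` is
Hermitian positive semi-definite, `Mᴴ c - a` lies in the range of `Q`, and
`Im b - |c|² ≥ xᴴ (Mᴴ c - a)` for any `x` with `Q x = Mᴴ c - a`. -/
theorem stmt4 {N : ℕ} (hN : 2 ≤ N) (lam : ℝ) (hlam : 0 < lam) (b : ℂ)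
    (a c : Fin (N - 1) → ℂ) (M : Matrix (Fin (N - 1)) (Fin (N - 1)) ℂ)
    (φ : ℂ × (Fin (N - 1) → ℂ) → ℂ × (Fin (N - 1) → ℂ))
    (hφ : ∀ p, φ p =
      ((lam : ℂ) * p.1 + 2 * Complex.I * herm p.2 a + b, M.mulVec p.2 + c)) :
    MapsTo φ {p : ℂ × (Fin (N - 1) → ℂ) | enormSq p.2 < p.1.im}
        {p : ℂ × (Fin (N - 1) → ℂ) | enormSq p.2 < p.1.im} ↔
      ((lam : ℂ) • (1 : Matrix (Fin (N - 1)) (Fin (N - 1)) ℂ) - Mᴴ * M).PosSemidef ∧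
      (∃ x : Fin (N - 1) → ℂ,
        ((lam : ℂ) • (1 : Matrix (Fin (N - 1)) (Fin (N - 1)) ℂ) - Mᴴ * M).mulVec x
          = Mᴴ.mulVec c - a) ∧
      (∀ x : Fin (N - 1) → ℂ,
        ((lam : ℂ) • (1 : Matrix (Fin (N - 1)) (Fin (N - 1)) ℂ) - Mᴴ * M).mulVec x
          = Mᴴ.mulVec c - a →
        b.im - enormSq c ≥ (herm (Mᴴ.mulVec c - a) x).re) := by
  set Q : Matrix (Fin (N - 1)) (Fin (N - 1)) ℂ :=
    (lam : ℂ) • (1 : Matrix (Fin (N - 1)) (Fin (N - 1)) ℂ) - Mᴴ * M with hQdef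
  set d : Fin (N - 1) → ℂ := Mᴴ.mulVec c - a with hddef
  set s0 : ℝ := b.im - enormSq c with hs0def
  -- basic computations
  have hermQ : ∀ w, herm (Q *ᵥ w) w
      = ((lam * enormSq w - enormSq (M *ᵥ w) : ℝ) : ℂ) := by
    intro w
    have h1 : Q *ᵥ w = (lam : ℂ) • w - (Mᴴ * M) *ᵥ w := by
      rw [hQdef, Matrix.sub_mulVec, Matrix.smul_mulVec, Matrix.one_mulVec]
    rw [h1, herm_sub_left, herm_smul_left, herm_self, ← Matrix.mulVec_mulVec,
      herm_mulVec_left, conjTranspose_conjTranspose, herm_self]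
    push_cast
    ring
  have hermQre : ∀ w, (herm (Q *ᵥ w) w).re = lam * enormSq w - enormSq (M *ᵥ w) := by
    intro w; rw [hermQ, Complex.ofReal_re]
  have hexp : ∀ w, enormSq (M *ᵥ w + c)
      = enormSq (M *ᵥ w) + 2 * (herm w (Mᴴ *ᵥ c)).re + enormSq c := by
    intro w
    have h1 : enormSq (M *ᵥ w + c) = (herm (M *ᵥ w + c) (M *ᵥ w + c)).re := by
      rw [herm_self, Complex.ofReal_re]
    rw [h1, herm_add_left, herm_add_right, herm_add_right, Complex.add_re, Complex.add_re,
      Complex.add_re, herm_self, herm_self, Complex.ofReal_re, Complex.ofReal_re]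
    have h2 : (herm c (M *ᵥ w)).re = (herm (M *ᵥ w) c).re := re_herm_comm _ _
    have h3 : herm (M *ᵥ w) c = herm w (Mᴴ *ᵥ c) := herm_mulVec_left _ _ _
    rw [h2, h3]
    ring
  have hermwd : ∀ w, (herm w d).re = (herm w (Mᴴ *ᵥ c)).re - (herm w a).re := by
    intro w; rw [hddef, herm_sub_right, Complex.sub_re]
  -- F w := (herm (Q *ᵥ w) w).re - 2*(herm w d).re + s0
  have identity : ∀ w, lam * enormSq w + 2 * (herm w a).re + b.im - enormSq (M *ᵥ w + c)
      = (herm (Q *ᵥ w) w).re - 2 * (herm w d).re + s0 := by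
    intro w
    rw [hermQre, hexp, hermwd, hs0def]
    ring
  -- step A : reduction of MapsTo
  have him : ∀ (z : ℂ) (w : Fin (N - 1) → ℂ),
      ((lam : ℂ) * z + 2 * Complex.I * herm w a + b).im
        = lam * z.im + 2 * (herm w a).re + b.im := by
    intro z w
    simp [Complex.add_im, Complex.mul_im, Complex.mul_re]
  have stepA : MapsTo φ {p : ℂ × (Fin (N - 1) → ℂ) | enormSq p.2 < p.1.im}
        {p : ℂ × (Fin (N - 1) → ℂ) | enormSq p.2 < p.1.im}
      ↔ ∀ w, 0 ≤ (herm (Q *ᵥ w) w).re - 2 * (herm w d).re + s0 := by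
    constructor
    · intro h w
      rw [← identity w]
      have key : ∀ ε : ℝ, 0 < ε → enormSq (M *ᵥ w + c)
          < lam * (enormSq w + ε) + 2 * (herm w a).re + b.im := by
        intro ε hε
        have hmem : (((enormSq w + ε : ℝ) : ℂ) * Complex.I, w)
            ∈ {p : ℂ × (Fin (N - 1) → ℂ) | enormSq p.2 < p.1.im} := by
          simp only [mem_setOf_eq, Complex.mul_I_im, Complex.ofReal_re]
          linarith
        have := h hmem
        rw [hφ] at this
        simp only [mem_setOf_eq] at this
        rw [him] at this
        simpa [Complex.mul_I_im, Complex.ofReal_re] using this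
      by_contra hlt
      push_neg at hlt
      have hε : (0:ℝ) < (enormSq (M *ᵥ w + c)
          - (lam * enormSq w + 2 * (herm w a).re + b.im)) / (2 * lam) := by
        apply div_pos <;> linarith
      have := key _ hε
      have hl2 : lam * ((enormSq (M *ᵥ w + c)
          - (lam * enormSq w + 2 * (herm w a).re + b.im)) / (2 * lam))
          = (enormSq (M *ᵥ w + c) - (lam * enormSq w + 2 * (herm w a).re + b.im)) / 2 := by
        field_simp
      nlinarith [this, hl2]
    · intro h p hp
      simp only [mem_setOf_eq] at hp
      rw [hφ]
      simp only [mem_setOf_eq]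
      rw [him]
      have h1 := h p.2
      rw [← identity p.2] at h1
      have h2 : lam * enormSq p.2 < lam * p.1.im := by
        exact mul_lt_mul_of_pos_left hp hlam
      linarith
  rw [stepA]
  constructor
  · intro hF
    have hQH : Q.IsHermitian := by
      rw [Matrix.IsHermitian, hQdef]
      rw [Matrix.conjTranspose_sub, Matrix.conjTranspose_smul, Matrix.conjTranspose_mul,
        Matrix.conjTranspose_conjTranspose, Matrix.conjTranspose_one]
      congr 1
      simp [Complex.star_def, Complex.conj_ofReal]
    -- positivity of the quadratic form
    have hq : ∀ w, 0 ≤ (herm (Q *ᵥ w) w).re := by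
      intro w
      by_contra hneg
      push_neg at hneg
      set q : ℝ := (herm (Q *ᵥ w) w).re with hqd
      set r : ℝ := (herm w d).re with hrd
      set t : ℝ := max 1 ((|s0| + 2 * |r| + 1) / (-q)) with htd
      have ht1 : (1:ℝ) ≤ t := le_max_left _ _
      have ht2 : |s0| + 2 * |r| + 1 ≤ t * (-q) := by
        have h1 : (|s0| + 2 * |r| + 1) / (-q) ≤ t := le_max_right _ _
        have h2 : (0:ℝ) < -q := by linarith
        calc |s0| + 2 * |r| + 1 = ((|s0| + 2 * |r| + 1) / (-q)) * (-q) := by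
              rw [div_mul_cancel₀ _ (ne_of_gt h2)]
          _ ≤ t * (-q) := by apply mul_le_mul_of_nonneg_right h1 (le_of_lt h2)
      have hFt := hF ((t : ℂ) • w)
      have e1 : herm (Q *ᵥ ((t : ℂ) • w)) ((t : ℂ) • w)
          = (t : ℂ) * ((starRingEnd ℂ) (t : ℂ) * herm (Q *ᵥ w) w) := by
        rw [Matrix.mulVec_smul, herm_smul_left, herm_smul_right]
      have e2 : herm ((t : ℂ) • w) d = (t : ℂ) * herm w d := herm_smul_left _ _ _
      rw [e1, e2] at hFt
      simp only [Complex.conj_ofReal] at hFt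
      rw [show ((t:ℂ) * ((t:ℂ) * herm (Q *ᵥ w) w)) = ((t*t : ℝ) : ℂ) * herm (Q *ᵥ w) w by
        push_cast; ring] at hFt
      rw [Complex.re_ofReal_mul, Complex.re_ofReal_mul, ← hqd, ← hrd] at hFt
      have ht0 : (0:ℝ) ≤ t := by linarith
      have hint1 : t * (|s0| + 2 * |r| + 1) ≤ t * (t * (-q)) :=
        mul_le_mul_of_nonneg_left ht2 ht0
      have hint2 : (0:ℝ) ≤ t * (r + |r|) :=
        mul_nonneg ht0 (by linarith [neg_abs_le r])
      have hint3 : (0:ℝ) ≤ (t - 1) * |s0| :=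
        mul_nonneg (by linarith) (abs_nonneg s0)
      nlinarith [hFt, hint1, hint2, hint3, le_abs_self s0, ht1]
    have hPSD : Q.PosSemidef := by
      refine PosSemidef.of_dotProduct_mulVec_nonneg hQH fun x => ?_
      have h1 : star x ⬝ᵥ (Q *ᵥ x) = herm (Q *ᵥ x) x := (herm_eq _ _).symm
      rw [h1, hermQ, Complex.zero_le_real, ← hermQre]
      exact hq x
    have horth : ∀ v, Q *ᵥ v = 0 → star v ⬝ᵥ d = 0 := by
      intro v hv
      have hkey : ∀ s : ℝ, 0 ≤ -2 * (s * Complex.normSq (herm v d)) + s0 := by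
        intro s
        have hFs := hF (((s : ℂ) * (starRingEnd ℂ) (herm v d)) • v)
        have e1 : Q *ᵥ (((s : ℂ) * (starRingEnd ℂ) (herm v d)) • v) = 0 := by
          rw [Matrix.mulVec_smul, hv, smul_zero]
        rw [e1, herm_zero_left] at hFs
        have e2 : herm (((s : ℂ) * (starRingEnd ℂ) (herm v d)) • v) d
            = (s : ℂ) * ((starRingEnd ℂ) (herm v d) * herm v d) := by
          rw [herm_smul_left]; ring
        rw [e2] at hFs
        rw [show (starRingEnd ℂ) (herm v d) * herm v d
            = ((Complex.normSq (herm v d) : ℝ) : ℂ) by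
          rw [mul_comm, Complex.mul_conj]] at hFs
        rw [show ((s:ℂ) * ((Complex.normSq (herm v d) : ℝ) : ℂ))
            = ((s * Complex.normSq (herm v d) : ℝ) : ℂ) by push_cast; ring] at hFs
        rw [Complex.ofReal_re] at hFs
        simpa using hFs
      have hns : Complex.normSq (herm v d) = 0 := by
        by_contra hne
        have hpos : 0 < Complex.normSq (herm v d) :=
          lt_of_le_of_ne (Complex.normSq_nonneg _) (Ne.symm hne)
        have hne' : Complex.normSq (herm v d) ≠ 0 := ne_of_gt hpos
        have hcon := hkey ((|s0| + 1) / (2 * Complex.normSq (herm v d)))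
        rw [show ((|s0| + 1) / (2 * Complex.normSq (herm v d)))
            * Complex.normSq (herm v d) = (|s0| + 1) / 2 by
          field_simp] at hcon
        linarith [le_abs_self s0]
      have h0 : herm v d = 0 := Complex.normSq_eq_zero.mp hns
      have hvd : star v ⬝ᵥ d = (starRingEnd ℂ) (herm v d) := by
        rw [← herm_eq, herm_conj v d]
      rw [hvd, h0, map_zero]
    obtain ⟨x, hx⟩ := exists_solution hQH horth
    refine ⟨hPSD, ⟨x, hx⟩, ?_⟩
    intro x' hx'
    have hFx := hF x'
    rw [hx'] at hFx
    have h1 : (herm x' d).re = (herm d x').re := re_herm_comm _ _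
    rw [h1] at hFx
    rw [hs0def] at hFx
    linarith
  · rintro ⟨hPSD, ⟨x, hx⟩, hbound⟩
    intro w
    have hb := hbound x hx
    have hQH : Q.IsHermitian := hPSD.1
    have hpos : 0 ≤ (herm (Q *ᵥ (w - x)) (w - x)).re := by
      have h1 := hPSD.dotProduct_mulVec_nonneg (w - x)
      rw [← herm_eq] at h1
      exact (Complex.le_def.mp h1).1.trans_eq' (by simp)
    -- expansion identity
    have hQwx : herm (Q *ᵥ w) x = herm w d := by
      rw [herm_mulVec_left, hQH.eq, hx]
    have hQsub : Q *ᵥ (w - x) = Q *ᵥ w - d := by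
      rw [Matrix.mulVec_sub, hx]
    have hexp2 : (herm (Q *ᵥ (w - x)) (w - x)).re
        = (herm (Q *ᵥ w) w).re - 2 * (herm w d).re + (herm d x).re := by
      rw [hQsub, herm_sub_left, herm_sub_right, herm_sub_right]
      simp only [Complex.sub_re]
      rw [hQwx]
      have h2 : (herm d w).re = (herm w d).re := re_herm_comm _ _
      rw [h2]
      ring
    rw [← hs0def] at *
    linarith [hpos, hexp2, hb]
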